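/- Let I be an l × (l+n) rational matrix and J an invertible l × l rational matrix with I Iᵀ = J Jᵀ, and suppose additionally that I applied to the all-ones vector 1_{l+n} equals J applied to the all-ones vector 1_l. Let K = 1_{l+n} ∈ Q^{l+n}. Then the orthogonal projection (with respect to the standard inner product) of K onto the row space of J^{-1}I has squared Euclidean norm equal to l, and consequently the orthogonal projection of K onto the kernel of I has squared norm l + n - l = n. -/
import Mathlib


open Matrix

/-- With `I * Iᵀ = J * Jᵀ`, `J` invertible, and `I·1 = J·1`, let
`K = (1,…,1) ∈ ℚ^{l+n}`. Since the rows of `M = J⁻¹I` are orthonormal, the orthogonal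
projection of `K` onto the row space of `M` is `Mᵀ (M K)`; its squared Euclidean norm
equals `l`, and the complementary projection `K - Mᵀ(M K)` lies in `ker I` and has
squared norm `n`. -/
theorem stmt7 (l n : ℕ)
    (I : Matrix (Fin l) (Fin (l + n)) ℚ) (J : Matrix (Fin l) (Fin l) ℚ)
    (hJ : IsUnit J.det) (h : I * Iᵀ = J * Jᵀ)
    (h1 : I.mulVec (fun _ => 1) = J.mulVec (fun _ => 1))
    (K : Fin (l + n) → ℚ) (hK : K = fun _ => 1)
    (proj : Fin (l + n) → ℚ)
    (hproj : proj = (J⁻¹ * I)ᵀ.mulVec ((J⁻¹ * I).mulVec K)) :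
    proj ⬝ᵥ proj = l ∧
    I.mulVec (K - proj) = 0 ∧
    (K - proj) ⬝ᵥ (K - proj) = n := by
  set M := J⁻¹ * I with hM
  have hJJ : J⁻¹ * J = 1 := nonsing_inv_mul J hJ
  have hJJ' : J * J⁻¹ = 1 := mul_nonsing_inv J hJ
  have hJtJt : Jᵀ * (Jᵀ)⁻¹ = 1 := mul_nonsing_inv _ (by simpa using hJ)
  have hMM : M * Mᵀ = 1 := by
    rw [hM, transpose_mul, transpose_nonsing_inv, Matrix.mul_assoc,
      ← Matrix.mul_assoc I, h, Matrix.mul_assoc J, hJtJt, Matrix.mul_one,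
      hJJ]
  have hv : M.mulVec K = fun _ => 1 := by
    rw [hM, ← mulVec_mulVec, hK, h1, mulVec_mulVec, hJJ, one_mulVec]
  obtain ⟨v, hvdef⟩ : ∃ v, v = M.mulVec K := ⟨_, rfl⟩
  rw [← hvdef] at hv
  have hvv : v ⬝ᵥ v = l := by
    rw [hv]; simp [dotProduct, Finset.sum_const]
  have hproj' : proj = Mᵀ.mulVec v := by rw [hproj, ← hvdef]
  have hpp : proj ⬝ᵥ proj = v ⬝ᵥ v := by
    rw [hproj', dotProduct_mulVec, vecMul_transpose, mulVec_mulVec, hMM,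
      one_mulVec]
  have hIMt : I * Mᵀ = J := by
    rw [hM, transpose_mul, transpose_nonsing_inv, ← Matrix.mul_assoc, h,
      Matrix.mul_assoc, hJtJt, Matrix.mul_one]
  have hIproj : I.mulVec proj = I.mulVec K := by
    rw [hproj', mulVec_mulVec, hIMt, hvdef, mulVec_mulVec, hM,
      ← Matrix.mul_assoc, hJJ', Matrix.one_mul]
  have hKp : K ⬝ᵥ proj = v ⬝ᵥ v := by
    rw [hproj', dotProduct_mulVec, vecMul_transpose, ← hvdef]
  have hpK : proj ⬝ᵥ K = v ⬝ᵥ v := by rw [dotProduct_comm]; exact hKp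
  have hKK : K ⬝ᵥ K = (l : ℚ) + n := by
    rw [hK]; simp [dotProduct, Finset.sum_const]
  refine ⟨by rw [hpp, hvv], ?_, ?_⟩
  · rw [Matrix.mulVec_sub, hIproj, sub_self]
  · rw [dotProduct_sub, sub_dotProduct, sub_dotProduct, hKK, hKp, hpK,
      hpp, hvv]
    ring
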